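/- arXiv:0910.0547 — 2 statements merged into one kernel-verified Lean document; each statement's English description precedes it below -/
import Mathlib

section
/- Let (X(i,j))_{i,j ∈ ℤ∖{0}} be an ℕ₀-valued symmetric array (X(i,j) = X(j,i) a.s., X(i,i) even a.s.) whose joint distribution is invariant under every finitely supported permutation of the index set ℤ∖{0}, and let N ⊆ ℕ be a finite set. Then the random variable (X(i,j))_{i,j∈N} and the random variable (X(i,j) : i < 0, j ∈ ℤ₋ ∪ ℕ) are conditionally independent given the σ-algebra generated by (X(i,j) : i < 0, j ∈ ℤ₋ ∪ N). -/
open MeasureTheory ProbabilityTheory Set Function Filter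

/-- Nonzero integers: the index set `ℤ ∖ {0}`. -/
abbrev NZ : Type := {z : ℤ // z ≠ 0}
/-- Negative integers `ℤ₋`. -/
abbrev NegZ : Type := {z : ℤ // z < 0}
/-- Positive integers (the copy of `ℕ = {1,2,…}` inside `ℤ ∖ {0}`). -/
abbrev PosZ : Type := {z : ℤ // 0 < z}

def negToNZ (z : NegZ) : NZ := ⟨z.1, z.2.ne⟩
def posToNZ (z : PosZ) : NZ := ⟨z.1, z.2.ne'⟩

/-- Two random variables `Y`, `Z` are conditionally independent given a sub-σ-algebra
`m'` if for all bounded measurable real functions `g`, `h`,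
`E[g(Y)h(Z) | m'] = E[g(Y) | m']·E[h(Z) | m']` almost surely. -/
def CondIndepPair {Ω : Type*} {S : Type*} {T : Type*}
    [MeasurableSpace S] [MeasurableSpace T] (m' : MeasurableSpace Ω)
    {m0 : MeasurableSpace Ω} (Y : Ω → S) (Z : Ω → T) (P : Measure Ω) : Prop :=
  ∀ (g : S → ℝ) (h : T → ℝ), Measurable g → Measurable h →
    (∃ C, ∀ x, ‖g x‖ ≤ C) → (∃ C, ∀ x, ‖h x‖ ≤ C) →
    (P[fun ω => g (Y ω) * h (Z ω)|m'])
      =ᵐ[P] fun ω => (P[fun ω' => g (Y ω')|m']) ω * (P[fun ω' => h (Z ω')|m']) ω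

section AuxGen

attribute [local instance] Classical.propDecidable

/-- Doob–Dynkin for countable discrete codomain: a real function measurable w.r.t.
`comap v` factors through `v`. -/
lemma factor_through_countable {Ω E : Type*} [MeasurableSpace E] [Countable E]
    {v : Ω → E} {f : Ω → ℝ}
    (hf : @Measurable Ω ℝ (MeasurableSpace.comap v inferInstance) _ f) :
    ∃ Ψ : E → ℝ, f = Ψ ∘ v := by
  classical
  have key : ∀ ω ω', v ω = v ω' → f ω = f ω' := by
    intro ω ω' hv
    have hs : MeasurableSet[MeasurableSpace.comap v inferInstance] (f ⁻¹' {f ω}) :=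
      hf (measurableSet_singleton _)
    obtain ⟨S, -, hS⟩ := hs
    have hω : ω ∈ f ⁻¹' {f ω} := rfl
    rw [← hS] at hω
    have h2 : ω' ∈ v ⁻¹' S := by simpa [Set.mem_preimage, ← hv] using hω
    rw [hS] at h2
    simpa using h2.symm
  refine ⟨fun e => if h : ∃ ω, v ω = e then f h.choose else 0, funext fun ω => ?_⟩
  have h : ∃ ω', v ω' = v ω := ⟨ω, rfl⟩
  simp only [comp_apply, dif_pos h]
  exact (key h.choose ω h.choose_spec).symm

/-- An involutive map swapping `d k ↔ d' k` and fixing everything else. -/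
noncomputable def swapMany {α : Type*} {m : ℕ} (d d' : Fin m → α) : α → α :=
  fun x => if h : ∃ k, d k = x then d' h.choose
    else if h : ∃ k, d' k = x then d h.choose else x

lemma swapMany_apply_d {α : Type*} {m : ℕ} {d d' : Fin m → α}
    (hd : Function.Injective d) (k : Fin m) :
    swapMany d d' (d k) = d' k := by
  have h : ∃ j, d j = d k := ⟨k, rfl⟩
  simp only [swapMany, dif_pos h]
  exact congrArg d' (hd h.choose_spec)

lemma swapMany_apply_d' {α : Type*} {m : ℕ} {d d' : Fin m → α}
    (hd' : Function.Injective d') (hdd' : ∀ k l, d k ≠ d' l) (k : Fin m) :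
    swapMany d d' (d' k) = d k := by
  have h1 : ¬ ∃ j, d j = d' k := fun ⟨j, hj⟩ => hdd' j k hj
  have h : ∃ j, d' j = d' k := ⟨k, rfl⟩
  simp only [swapMany, dif_neg h1, dif_pos h]
  exact congrArg d (hd' h.choose_spec)

lemma swapMany_apply_other {α : Type*} {m : ℕ} {d d' : Fin m → α}
    {x : α} (h1 : ∀ k, d k ≠ x) (h2 : ∀ k, d' k ≠ x) :
    swapMany d d' x = x := by
  simp only [swapMany, dif_neg (fun ⟨k, hk⟩ => h1 k hk : ¬ ∃ k, d k = x),
    dif_neg (fun ⟨k, hk⟩ => h2 k hk : ¬ ∃ k, d' k = x)]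

lemma swapMany_involutive {α : Type*} {m : ℕ} {d d' : Fin m → α}
    (hd : Function.Injective d) (hd' : Function.Injective d')
    (hdd' : ∀ k l, d k ≠ d' l) : Function.Involutive (swapMany d d') := by
  intro x
  by_cases h1 : ∃ k, d k = x
  · obtain ⟨k, rfl⟩ := h1
    rw [swapMany_apply_d hd k, swapMany_apply_d' hd' hdd' k]
  · by_cases h2 : ∃ k, d' k = x
    · obtain ⟨k, rfl⟩ := h2
      rw [swapMany_apply_d' hd' hdd' k, swapMany_apply_d hd k]
    · push_neg at h1 h2
      rw [swapMany_apply_other h1 h2, swapMany_apply_other h1 h2]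

/-- Pull-out: integral of `ρ * E[f|m]` equals integral of `ρ * f` for bounded
`m`-measurable `ρ`. -/
lemma integral_mul_condexp {Ω : Type*} {m m0 : MeasurableSpace Ω} {P : Measure Ω}
    [IsProbabilityMeasure P] (hm : m ≤ m0) {ρ f : Ω → ℝ}
    (hρ : StronglyMeasurable[m] ρ) {C : ℝ} (hρbdd : ∀ ω, ‖ρ ω‖ ≤ C)
    (hf : Integrable f P) :
    ∫ ω, ρ ω * (P[f|m]) ω ∂P = ∫ ω, ρ ω * f ω ∂P := by
  haveI : SigmaFinite (P.trim hm) := (isFiniteMeasure_trim hm).toSigmaFinite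
  have hρm0 : AEStronglyMeasurable ρ P := (hρ.mono hm).aestronglyMeasurable
  have hint1 : Integrable (ρ * f) P := hf.bdd_mul (c := C) hρm0 (ae_of_all _ hρbdd)
  have h1 : P[ρ * f|m] =ᵐ[P] ρ * P[f|m] :=
    condExp_mul_of_stronglyMeasurable_left hρ hint1 hf
  have h2 : ∫ ω, (P[ρ * f|m]) ω ∂P = ∫ ω, (ρ * f) ω ∂P := integral_condExp hm
  calc ∫ ω, ρ ω * (P[f|m]) ω ∂P = ∫ ω, (P[ρ * f|m]) ω ∂P := integral_congr_ae h1.symm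
    _ = ∫ ω, (ρ * f) ω ∂P := h2
    _ = ∫ ω, ρ ω * f ω ∂P := rfl

end AuxGen

namespace SubarrayAux

/-- Construct a finitely-supported involution of `NZ` swapping each element of `D`
(a finite set of positive indices) with a fresh negative index avoiding `FZ`. -/
lemma exists_fresh_swap (FZ : Finset ℤ) (D : Finset NZ) (hDpos : ∀ c ∈ D, (0:ℤ) < c.1) :
    ∃ τ : NZ → NZ, Function.Involutive τ ∧ {x : NZ | τ x ≠ x}.Finite ∧
      (∀ x : NZ, x ∉ D → x.1 ∈ FZ → τ x = x) ∧
      (∀ c ∈ D, (τ c).1 < 0 ∧ (τ c).1 ∉ FZ) := by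
  classical
  set M : ℕ := FZ.sup Int.natAbs with hM
  have hFZ : ∀ z ∈ FZ, z.natAbs ≤ M := fun z hz => Finset.le_sup hz
  set m := D.card
  set d : Fin m → NZ := fun k => (D.equivFin.symm k).1 with hd_def
  have hd : Function.Injective d :=
    Subtype.val_injective.comp D.equivFin.symm.injective
  have hdD : ∀ k, d k ∈ D := fun k => (D.equivFin.symm k).2
  have hdsurj : ∀ c ∈ D, ∃ k, d k = c := fun c hc => ⟨D.equivFin ⟨c, hc⟩, by simp [hd_def]⟩
  set d' : Fin m → NZ := fun k => ⟨-((M : ℤ) + 1 + k), by omega⟩ with hd'_def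
  have hd' : Function.Injective d' := by
    intro k l h
    simp only [hd'_def, Subtype.mk_eq_mk, neg_inj, add_right_inj] at h
    exact Fin.ext (by exact_mod_cast h)
  have hd'neg : ∀ k, (d' k).1 < 0 := fun k => by simp only [hd'_def]; omega
  have hd'FZ : ∀ k, (d' k).1 ∉ FZ := by
    intro k hk
    have := hFZ _ hk
    simp only [hd'_def, Int.natAbs_neg] at this
    omega
  have hdd' : ∀ k l, d k ≠ d' l := by
    intro k l h
    have h1 := hDpos _ (hdD k)
    have h2 := hd'neg l
    rw [h] at h1; omega
  refine ⟨swapMany d d', swapMany_involutive hd hd' hdd', ?_, ?_, ?_⟩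
  · apply Set.Finite.subset (((Set.finite_range d).union (Set.finite_range d')))
    intro x hx
    by_contra hmem
    simp only [Set.mem_union, Set.mem_range, not_or, not_exists] at hmem
    exact hx (swapMany_apply_other (fun k => hmem.1 k) (fun k => hmem.2 k))
  · intro x hxD hxFZ
    apply swapMany_apply_other
    · intro k hk; exact hxD (hk ▸ hdD k)
    · intro k hk; exact hd'FZ k (hk ▸ hxFZ)
  · intro c hc
    obtain ⟨k, rfl⟩ := hdsurj c hc
    rw [swapMany_apply_d hd k]
    exact ⟨hd'neg k, hd'FZ k⟩

variable {Ω : Type*} [mΩ : MeasurableSpace Ω]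

/-- Transfer of integrals along a finitely-supported permutation, from exchangeability. -/
lemma exch_integral (P : Measure Ω)
    (X : NZ → NZ → Ω → ℕ) (hXmeas : ∀ i j, Measurable (X i j))
    (hexch : ∀ τ : Equiv.Perm NZ, {x | τ x ≠ x}.Finite →
      Measure.map (fun ω => fun p : NZ × NZ => X (τ p.1) (τ p.2) ω) P =
        Measure.map (fun ω => fun p : NZ × NZ => X p.1 p.2 ω) P)
    (τ : Equiv.Perm NZ) (hτ : {x | τ x ≠ x}.Finite)
    (F : (NZ × NZ → ℕ) → ℝ) (hF : Measurable F) :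
    ∫ ω, F (fun q : NZ × NZ => X (τ q.1) (τ q.2) ω) ∂P
      = ∫ ω, F (fun q : NZ × NZ => X q.1 q.2 ω) ∂P := by
  have hm1 : Measurable (fun ω => fun q : NZ × NZ => X (τ q.1) (τ q.2) ω) :=
    measurable_pi_lambda _ fun q => hXmeas _ _
  have hm2 : Measurable (fun ω => fun q : NZ × NZ => X q.1 q.2 ω) :=
    measurable_pi_lambda _ fun q => hXmeas _ _
  rw [← integral_map hm1.aemeasurable hF.stronglyMeasurable.aestronglyMeasurable,
      ← integral_map hm2.aemeasurable hF.stronglyMeasurable.aestronglyMeasurable,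
      hexch τ hτ]

variable (X : NZ → NZ → Ω → ℕ) (N : Finset PosZ)

def elimN : NegZ ⊕ {x // x ∈ N} → NZ := Sum.elim negToNZ fun x => posToNZ x.1

def Yf : Ω → ({x // x ∈ N} × {x // x ∈ N} → ℕ) :=
  fun ω => fun p => X (posToNZ p.1.1) (posToNZ p.2.1) ω

def Zf : Ω → (NegZ × NZ → ℕ) := fun ω => fun p => X (negToNZ p.1) p.2 ω

def Vf : Ω → (NegZ × (NegZ ⊕ {x // x ∈ N}) → ℕ) :=
  fun ω => fun p => X (negToNZ p.1) (elimN N p.2) ω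

def mV : MeasurableSpace Ω := MeasurableSpace.comap (Vf X N) inferInstance

def mZc : MeasurableSpace Ω := MeasurableSpace.comap (Zf X) inferInstance

noncomputable def chi (s : Finset (NegZ × NZ)) (S : Set (∀ _ : {x // x ∈ s}, ℕ)) : Ω → ℝ :=
  fun ω => S.indicator (fun _ => (1:ℝ)) (fun p : {x // x ∈ s} => Zf X ω p.1)

variable {X N}

lemma hYf_meas (hXmeas : ∀ i j, Measurable (X i j)) : Measurable (Yf X N) :=
  measurable_pi_lambda _ fun _ => hXmeas _ _

lemma hZf_meas (hXmeas : ∀ i j, Measurable (X i j)) : Measurable (Zf X) :=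
  measurable_pi_lambda _ fun _ => hXmeas _ _

lemma hVf_meas (hXmeas : ∀ i j, Measurable (X i j)) : Measurable (Vf X N) :=
  measurable_pi_lambda _ fun _ => hXmeas _ _

lemma mV_le (hXmeas : ∀ i j, Measurable (X i j)) : mV X N ≤ mΩ :=
  (hVf_meas hXmeas).comap_le

lemma mZc_le (hXmeas : ∀ i j, Measurable (X i j)) : mZc X ≤ mΩ :=
  (hZf_meas hXmeas).comap_le

lemma mV_le_mZc : (mV X N : MeasurableSpace Ω) ≤ mZc X := by
  have h : (Vf X N : Ω → _)
      = (fun f (p : NegZ × (NegZ ⊕ {x // x ∈ N})) => f (p.1, elimN N p.2)) ∘ Zf X := rfl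
  rw [mV, mZc, h, ← MeasurableSpace.comap_comp]
  exact MeasurableSpace.comap_mono
    (measurable_pi_lambda _ fun p => measurable_pi_apply _).comap_le


/-- Per-`n` cylinder step: there is an `mV`-measurable bounded substitute `χ'` for the
cylinder indicator `chi`, with the same correlations against `g(Y)` and against any
function of the first `n` generators of `mV`. -/
lemma cylinder_step (P : Measure Ω)
    (hXmeas : ∀ i j, Measurable (X i j))
    (hexch : ∀ τ : Equiv.Perm NZ, {x | τ x ≠ x}.Finite →
      Measure.map (fun ω => fun p : NZ × NZ => X (τ p.1) (τ p.2) ω) P =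
        Measure.map (fun ω => fun p : NZ × NZ => X p.1 p.2 ω) P)
    (g : ({x // x ∈ N} × {x // x ∈ N} → ℕ) → ℝ) (hgm : Measurable g)
    (s : Finset (NegZ × NZ)) (S : Set (∀ _ : {x // x ∈ s}, ℕ)) (hS : MeasurableSet S)
    (n : ℕ) (u : ℕ → NegZ × (NegZ ⊕ {x // x ∈ N})) :
    ∃ χ' : Ω → ℝ,
      StronglyMeasurable[mV X N] χ' ∧ (∀ ω, ‖χ' ω‖ ≤ 1) ∧
      (∫ ω, g (Yf X N ω) * chi X s S ω ∂P = ∫ ω, g (Yf X N ω) * χ' ω ∂P) ∧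
      (∀ Ψ : (Fin n → ℕ) → ℝ, Measurable Ψ →
        ∫ ω, Ψ (fun k => Vf X N ω (u k)) * chi X s S ω ∂P
          = ∫ ω, Ψ (fun k => Vf X N ω (u k)) * χ' ω ∂P) := by
  classical
  set NZvals : Finset ℤ := N.image (fun x => (x.1 : ℤ)) with hNZvals
  set D : Finset NZ := (s.image Prod.snd).filter (fun c => 0 < c.1 ∧ c.1 ∉ NZvals) with hD
  set FZ : Finset ℤ := ((((s.image fun p => (p.1.1 : ℤ)) ∪ (s.image fun p => (p.2.1 : ℤ)))
      ∪ NZvals) ∪ ((Finset.range n).image fun k => ((u k).1.1 : ℤ)))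
      ∪ ((Finset.range n).image fun k => ((elimN N (u k).2).1 : ℤ)) with hFZ
  have hDpos : ∀ c ∈ D, (0:ℤ) < c.1 := fun c hc => ((Finset.mem_filter.mp hc).2).1
  obtain ⟨τ, τinv, τfin, τfix, τD⟩ := exists_fresh_swap FZ D hDpos
  -- membership facts
  have hrowFZ : ∀ p : {x // x ∈ s}, ((p.1.1.1 : ℤ)) ∈ FZ := by
    intro p
    simp only [hFZ, Finset.mem_union]
    exact Or.inl (Or.inl (Or.inl (Or.inl (Finset.mem_image.mpr ⟨p.1, p.2, rfl⟩))))
  have hcolFZ : ∀ p : {x // x ∈ s}, ((p.1.2.1 : ℤ)) ∈ FZ := by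
    intro p
    simp only [hFZ, Finset.mem_union]
    exact Or.inl (Or.inl (Or.inl (Or.inr (Finset.mem_image.mpr ⟨p.1, p.2, rfl⟩))))
  have hNFZ : ∀ x : {x // x ∈ N}, ((x.1.1 : ℤ)) ∈ FZ := by
    intro x
    simp only [hFZ, Finset.mem_union]
    exact Or.inl (Or.inl (Or.inr (Finset.mem_image.mpr ⟨x.1, x.2, rfl⟩)))
  have huRowFZ : ∀ k : Fin n, (((u k).1.1 : ℤ)) ∈ FZ := by
    intro k
    simp only [hFZ, Finset.mem_union]
    exact Or.inl (Or.inr (Finset.mem_image.mpr ⟨k, Finset.mem_range.mpr k.2, rfl⟩))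
  have huColFZ : ∀ k : Fin n, ((elimN N (u k).2).1 : ℤ) ∈ FZ := by
    intro k
    simp only [hFZ, Finset.mem_union]
    exact Or.inr (Finset.mem_image.mpr ⟨k, Finset.mem_range.mpr k.2, rfl⟩)
  -- fixed points
  have hnegNotD : ∀ z : NZ, z.1 < 0 → z ∉ D := fun z hz hmem => by
    have := hDpos z hmem; omega
  have hNnotD : ∀ x : {x // x ∈ N}, posToNZ x.1 ∉ D := by
    intro x hx
    exact (Finset.mem_filter.mp hx).2.2 (Finset.mem_image.mpr ⟨x.1, x.2, rfl⟩)
  have hNfix : ∀ x : {x // x ∈ N}, τ (posToNZ x.1) = posToNZ x.1 :=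
    fun x => τfix _ (hNnotD x) (hNFZ x)
  have hrowfix : ∀ (r : NegZ), (r.1 : ℤ) ∈ FZ → τ (negToNZ r) = negToNZ r :=
    fun r h => τfix _ (hnegNotD _ r.2) h
  have hcolfixU : ∀ k : Fin n, τ (elimN N (u k).2) = elimN N (u k).2 := by
    intro k
    rcases h2 : (u k).2 with c | x
    · refine τfix _ (hnegNotD _ ?_) (by rw [← h2]; exact huColFZ k)
      show (elimN N (Sum.inl c)).1 < 0
      exact c.2
    · exact hNfix x
  -- the substituted indicator
  set χ' : Ω → ℝ := fun ω =>
    S.indicator (fun _ => (1:ℝ)) (fun p : {x // x ∈ s} => X (negToNZ p.1.1) (τ p.1.2) ω)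
    with hχ'
  -- χ' is mV-measurable
  have hwit : ∀ p : {x // x ∈ s}, ∃ j : NegZ ⊕ {x // x ∈ N}, elimN N j = τ p.1.2 := by
    intro p
    by_cases hDp : p.1.2 ∈ D
    · exact ⟨Sum.inl ⟨(τ p.1.2).1, (τD _ hDp).1⟩, Subtype.ext rfl⟩
    · have hfixp : τ p.1.2 = p.1.2 := τfix _ hDp (hcolFZ p)
      rw [hfixp]
      rcases p.1.2.2.lt_or_gt with hneg | hpos
      · exact ⟨Sum.inl ⟨p.1.2.1, hneg⟩, Subtype.ext rfl⟩
      · have hmem : p.1.2.1 ∈ NZvals := by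
          by_contra hn
          exact hDp (Finset.mem_filter.mpr
            ⟨Finset.mem_image.mpr ⟨p.1, p.2, rfl⟩, hpos, hn⟩)
        obtain ⟨x, hxN, hxval⟩ := Finset.mem_image.mp hmem
        exact ⟨Sum.inr ⟨x, hxN⟩, Subtype.ext (by simp [elimN, posToNZ, hxval])⟩
  have hχ'meas : StronglyMeasurable[mV X N] χ' := by
    have hVmV : @Measurable Ω _ (mV X N) _ (Vf X N) := Measurable.of_comap_le le_rfl
    have heq : χ' = (fun v : (NegZ × (NegZ ⊕ {x // x ∈ N})) → ℕ =>
        S.indicator (fun _ => (1:ℝ))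
          (fun p : {x // x ∈ s} => v (p.1.1, (hwit p).choose))) ∘ (Vf X N) := by
      funext ω
      simp only [hχ', comp_apply]
      congr 1
      funext p
      show X (negToNZ p.1.1) (τ p.1.2) ω = X (negToNZ p.1.1) (elimN N (hwit p).choose) ω
      rw [(hwit p).choose_spec]
    rw [heq]
    exact (((measurable_const.indicator hS).comp
      (measurable_pi_lambda _ fun p => measurable_pi_apply _)).comp hVmV).stronglyMeasurable
  have hχ'bdd : ∀ ω, ‖χ' ω‖ ≤ 1 := by
    intro ω
    simp only [hχ']
    rw [Set.indicator_apply]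
    split <;> simp
  -- the main transfer principle
  have main : ∀ W : (NZ × NZ → ℕ) → ℝ, Measurable W →
      (∀ a : NZ × NZ → ℕ, W (fun q => a (τ q.1, τ q.2)) = W a) →
      ∫ ω, W (fun q : NZ × NZ => X q.1 q.2 ω) * chi X s S ω ∂P
        = ∫ ω, W (fun q : NZ × NZ => X q.1 q.2 ω) * χ' ω ∂P := by
    intro W hW hWinv
    set τp : Equiv.Perm NZ := Function.Involutive.toPerm τ τinv with hτp
    have hτpc : ∀ x, τp x = τ x := fun x => rfl
    have hsupp : {x : NZ | τp x ≠ x}.Finite := τfin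
    set F : (NZ × NZ → ℕ) → ℝ := fun a => W a *
      S.indicator (fun _ => (1:ℝ))
        (fun p : {x // x ∈ s} => a (negToNZ p.1.1, τ p.1.2)) with hF
    have hFm : Measurable F := hW.mul ((measurable_const.indicator hS).comp
      (measurable_pi_lambda _ fun p => measurable_pi_apply _))
    have h := exch_integral P X hXmeas hexch τp hsupp F hFm
    have hLHS : ∀ ω, F (fun q : NZ × NZ => X (τp q.1) (τp q.2) ω)
        = W (fun q : NZ × NZ => X q.1 q.2 ω) * chi X s S ω := by
      intro ω
      simp only [hF]
      have h1 : W (fun q : NZ × NZ => X (τp q.1) (τp q.2) ω)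
          = W (fun q : NZ × NZ => X q.1 q.2 ω) :=
        hWinv (fun q : NZ × NZ => X q.1 q.2 ω)
      rw [h1]
      congr 1
      show S.indicator _ (fun p : {x // x ∈ s} => X (τp (negToNZ p.1.1)) (τp (τ p.1.2)) ω) = _
      congr 1
      funext p
      show X (τ (negToNZ p.1.1)) (τ (τ p.1.2)) ω = Zf X ω p.1
      rw [hrowfix p.1.1 (hrowFZ p), τinv p.1.2]
      rfl
    have hRHS : ∀ ω, F (fun q : NZ × NZ => X q.1 q.2 ω)
        = W (fun q : NZ × NZ => X q.1 q.2 ω) * χ' ω := fun ω => rfl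
    calc ∫ ω, W (fun q : NZ × NZ => X q.1 q.2 ω) * chi X s S ω ∂P
        = ∫ ω, F (fun q : NZ × NZ => X (τp q.1) (τp q.2) ω) ∂P := by
          exact integral_congr_ae (Eventually.of_forall fun ω => (hLHS ω).symm)
      _ = ∫ ω, F (fun q : NZ × NZ => X q.1 q.2 ω) ∂P := h
      _ = ∫ ω, W (fun q : NZ × NZ => X q.1 q.2 ω) * χ' ω ∂P := by
          exact integral_congr_ae (Eventually.of_forall fun ω => hRHS ω)
  refine ⟨χ', hχ'meas, hχ'bdd, ?_, ?_⟩
  · have hWm : Measurable (fun a : NZ × NZ → ℕ =>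
        g (fun p : {x // x ∈ N} × {x // x ∈ N} => a (posToNZ p.1.1, posToNZ p.2.1))) :=
      hgm.comp (measurable_pi_lambda _ fun p => measurable_pi_apply _)
    have hWinv : ∀ a : NZ × NZ → ℕ,
        g (fun p : {x // x ∈ N} × {x // x ∈ N} => a (τ (posToNZ p.1.1), τ (posToNZ p.2.1)))
          = g (fun p : {x // x ∈ N} × {x // x ∈ N} => a (posToNZ p.1.1, posToNZ p.2.1)) := by
      intro a
      congr 1
      funext p
      rw [hNfix p.1, hNfix p.2]
    exact main _ hWm hWinv
  · intro Ψ hΨ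
    have hWm : Measurable (fun a : NZ × NZ → ℕ =>
        Ψ (fun k : Fin n => a (negToNZ (u k).1, elimN N (u k).2))) :=
      hΨ.comp (measurable_pi_lambda _ fun k => measurable_pi_apply _)
    have hWinv : ∀ a : NZ × NZ → ℕ,
        Ψ (fun k : Fin n => a (τ (negToNZ (u k).1), τ (elimN N (u k).2)))
          = Ψ (fun k : Fin n => a (negToNZ (u k).1, elimN N (u k).2)) := by
      intro a
      congr 1
      funext k
      rw [hrowfix (u k).1 (huRowFZ k), hcolfixU k]
    exact main _ hWm hWinv



lemma condexp_eq (P : Measure Ω) [IsProbabilityMeasure P]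
    (hXmeas : ∀ i j, Measurable (X i j))
    (hexch : ∀ τ : Equiv.Perm NZ, {x | τ x ≠ x}.Finite →
      Measure.map (fun ω => fun p : NZ × NZ => X (τ p.1) (τ p.2) ω) P =
        Measure.map (fun ω => fun p : NZ × NZ => X p.1 p.2 ω) P)
    (g : ({x // x ∈ N} × {x // x ∈ N} → ℕ) → ℝ) (hgm : Measurable g)
    (Cg : ℝ) (hCg : ∀ x, ‖g x‖ ≤ Cg) :
    P[fun ω => g (Yf X N ω)|mV X N] =ᵐ[P] P[fun ω => g (Yf X N ω)|mZc X] := by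
  classical
  have hm'le : (mV X N : MeasurableSpace Ω) ≤ mΩ := mV_le hXmeas
  have hmZle : (mZc X : MeasurableSpace Ω) ≤ mΩ := mZc_le hXmeas
  haveI : SigmaFinite (P.trim hm'le) := (isFiniteMeasure_trim hm'le).toSigmaFinite
  haveI : SigmaFinite (P.trim hmZle) := (isFiniteMeasure_trim hmZle).toSigmaFinite
  have hCg0 : 0 ≤ Cg := le_trans (norm_nonneg _) (hCg (fun _ => 0))
  have hgYm : Measurable (fun ω => g (Yf X N ω)) := hgm.comp (hYf_meas hXmeas)
  have hgYint : Integrable (fun ω => g (Yf X N ω)) P :=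
    ⟨hgYm.aestronglyMeasurable, HasFiniteIntegral.of_bounded (ae_of_all _ fun ω => hCg _)⟩
  set gY : Ω → ℝ := fun ω => g (Yf X N ω) with hgY
  set ξ : Ω → ℝ := P[gY|mV X N] with hξdef
  -- enumeration of the generators of mV
  obtain ⟨u, hu⟩ := exists_surjective_nat (NegZ × (NegZ ⊕ {x // x ∈ N}))
  -- the filtration
  have hseq_meas : ∀ n : ℕ, Measurable (fun ω => fun k : Fin n => Vf X N ω (u k)) :=
    fun n => measurable_pi_lambda _ fun k => (measurable_pi_apply _).comp (hVf_meas hXmeas)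
  have hseq_mono : ∀ {a b : ℕ}, a ≤ b →
      (MeasurableSpace.comap (fun ω => fun k : Fin a => Vf X N ω (u k)) inferInstance
        : MeasurableSpace Ω)
      ≤ MeasurableSpace.comap (fun ω => fun k : Fin b => Vf X N ω (u k)) inferInstance := by
    intro a b hab
    have hcomp : (fun ω => fun k : Fin a => Vf X N ω (u k))
        = (fun (v : Fin b → ℕ) (k : Fin a) => v (Fin.castLE hab k))
          ∘ (fun ω => fun k : Fin b => Vf X N ω (u k)) := rfl
    rw [hcomp, ← MeasurableSpace.comap_comp]
    exact MeasurableSpace.comap_mono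
      (measurable_pi_lambda _ fun k => measurable_pi_apply _).comap_le
  set 𝒢 : Filtration ℕ mΩ :=
    { seq := fun n => MeasurableSpace.comap (fun ω => fun k : Fin n => Vf X N ω (u k))
        inferInstance
      mono' := fun a b hab => hseq_mono hab
      le' := fun n => (hseq_meas n).comap_le } with h𝒢
  have h𝒢leV : ∀ n, 𝒢 n ≤ mV X N := by
    intro n
    have hcomp : (fun ω => fun k : Fin n => Vf X N ω (u k))
        = (fun (v : (NegZ × (NegZ ⊕ {x // x ∈ N})) → ℕ) (k : Fin n) => v (u k))
          ∘ (Vf X N) := rfl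
    show MeasurableSpace.comap _ _ ≤ _
    rw [hcomp, ← MeasurableSpace.comap_comp]
    exact MeasurableSpace.comap_mono
      (measurable_pi_lambda _ fun k => measurable_pi_apply _).comap_le
  have hsup : (⨆ n, 𝒢 n) = mV X N := by
    refine le_antisymm (iSup_le h𝒢leV) ?_
    have hpi : (inferInstance : MeasurableSpace ((NegZ × (NegZ ⊕ {x // x ∈ N})) → ℕ))
        = ⨆ i : NegZ × (NegZ ⊕ {x // x ∈ N}),
            MeasurableSpace.comap (fun v => v i) inferInstance := rfl
    show MeasurableSpace.comap (Vf X N) _ ≤ _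
    rw [hpi, MeasurableSpace.comap_iSup]
    refine iSup_le fun i => ?_
    obtain ⟨k, rfl⟩ := hu i
    have hcomp : ((fun v : (NegZ × (NegZ ⊕ {x // x ∈ N})) → ℕ => v (u k)) ∘ (Vf X N))
        = (fun (v : Fin (k+1) → ℕ) => v ⟨k, Nat.lt_succ_self k⟩)
          ∘ (fun ω => fun j : Fin (k+1) => Vf X N ω (u j)) := rfl
    rw [MeasurableSpace.comap_comp, hcomp, ← MeasurableSpace.comap_comp]
    exact le_trans
      (MeasurableSpace.comap_mono (measurable_pi_apply _).comap_le)
      (le_iSup (fun n => (𝒢 n : MeasurableSpace Ω)) (k+1))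
  -- martingale convergence
  set ξn : ℕ → Ω → ℝ := fun n => P[gY|𝒢 n] with hξn
  have hξint : Integrable ξ P := integrable_condExp
  have hξmeasSup : StronglyMeasurable[⨆ n, 𝒢 n] ξ := by
    rw [hsup]; exact stronglyMeasurable_condExp
  have hconv := hξint.tendsto_ae_condExp hξmeasSup
  have htower : ∀ n, P[ξ|𝒢 n] =ᵐ[P] ξn n :=
    fun n => condExp_condExp_of_le (h𝒢leV n) hm'le
  have hae : ∀ᵐ ω ∂P, Tendsto (fun n => ξn n ω) atTop (nhds (ξ ω)) := by
    filter_upwards [hconv, ae_all_iff.mpr htower] with ω h1 h2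
    exact Tendsto.congr (fun n => h2 n) h1
  have hgYbdd : ∀ᵐ ω ∂P, |gY ω| ≤ (Cg.toNNReal : ℝ) := by
    refine ae_of_all _ fun ω => ?_
    rw [Real.coe_toNNReal _ hCg0, ← Real.norm_eq_abs]
    exact hCg _
  have hbddn : ∀ n, ∀ᵐ ω ∂P, |ξn n ω| ≤ Cg := by
    intro n
    filter_upwards [ae_bdd_condExp_of_ae_bdd (m := 𝒢 n) hgYbdd] with ω hω
    rwa [Real.coe_toNNReal _ hCg0] at hω
  have hbddξ : ∀ᵐ ω ∂P, |ξ ω| ≤ Cg := by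
    filter_upwards [ae_bdd_condExp_of_ae_bdd (m := mV X N) hgYbdd] with ω hω
    rwa [Real.coe_toNNReal _ hCg0] at hω
  have hξnmeas : ∀ n, AEStronglyMeasurable (ξn n) P :=
    fun n => (stronglyMeasurable_condExp.mono (𝒢.le' n)).aestronglyMeasurable
  have hξmeas : AEStronglyMeasurable ξ P :=
    (stronglyMeasurable_condExp.mono hm'le).aestronglyMeasurable
  have hξnint : ∀ n, Integrable (ξn n) P := fun n => integrable_condExp
  -- L¹ convergence
  set ε : ℕ → ℝ := fun n => ∫ ω, |ξn n ω - ξ ω| ∂P with hε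
  have hL1 : Tendsto ε atTop (nhds 0) := by
    have h0 : (0 : ℝ) = ∫ (_ : Ω), (0:ℝ) ∂P := by simp
    rw [h0]
    refine tendsto_integral_of_dominated_convergence (fun _ => 2 * Cg)
      (fun n => ((hξnmeas n).sub hξmeas).norm) (integrable_const _) ?_ ?_
    · intro n
      filter_upwards [hbddn n, hbddξ] with ω h1 h2
      have : |ξn n ω - ξ ω| ≤ |ξn n ω| + |ξ ω| := abs_sub _ _
      rw [Real.norm_eq_abs, abs_abs]
      linarith
    · filter_upwards [hae] with ω hω
      have h2 : Tendsto (fun n => |ξn n ω - ξ ω|) atTop (nhds (|ξ ω - ξ ω|)) :=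
        (hω.sub (tendsto_const_nhds (x := ξ ω))).abs
      simpa using h2
  -- the cylinder identity
  have hcylinder : ∀ (s : Finset (NegZ × NZ)) (S : Set (∀ _ : {x // x ∈ s}, ℕ)),
      MeasurableSet S →
      ∫ ω, ξ ω * chi X s S ω ∂P = ∫ ω, gY ω * chi X s S ω ∂P := by
    intro s S hS
    have hchim : Measurable (chi X s S) :=
      (measurable_const.indicator hS).comp
        ((measurable_pi_lambda _ fun p => measurable_pi_apply _).comp (hZf_meas hXmeas))
    have hchibdd : ∀ ω, ‖chi X s S ω‖ ≤ 1 := by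
      intro ω
      rw [chi, Set.indicator_apply]
      split <;> simp
    -- difference bound for multiplication against bounded ρ
    have hdiff : ∀ (n : ℕ) (ρ : Ω → ℝ), AEStronglyMeasurable ρ P → (∀ ω, ‖ρ ω‖ ≤ 1) →
        |∫ ω, ξn n ω * ρ ω ∂P - ∫ ω, ξ ω * ρ ω ∂P| ≤ ε n := by
      intro n ρ hρm hρb
      have hint1 : Integrable (fun ω => ξn n ω * ρ ω) P := by
        refine Integrable.bdd_mul (c := Cg)
          (⟨hρm, HasFiniteIntegral.of_bounded (ae_of_all _ hρb)⟩) (hξnmeas n) ?_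
        filter_upwards [hbddn n] with ω hω
        rwa [Real.norm_eq_abs]
      have hint2 : Integrable (fun ω => ξ ω * ρ ω) P := by
        refine Integrable.bdd_mul (c := Cg)
          (⟨hρm, HasFiniteIntegral.of_bounded (ae_of_all _ hρb)⟩) hξmeas ?_
        filter_upwards [hbddξ] with ω hω
        rwa [Real.norm_eq_abs]
      rw [← integral_sub hint1 hint2]
      have hptw : ∀ ω, |(ξn n ω * ρ ω - ξ ω * ρ ω)| ≤ |ξn n ω - ξ ω| := by
        intro ω
        have : ξn n ω * ρ ω - ξ ω * ρ ω = (ξn n ω - ξ ω) * ρ ω := by ring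
        rw [this, abs_mul]
        have := hρb ω
        rw [Real.norm_eq_abs] at this
        exact mul_le_of_le_one_right (abs_nonneg _) this
      calc |∫ ω, (ξn n ω * ρ ω - ξ ω * ρ ω) ∂P|
          ≤ ∫ ω, |ξn n ω * ρ ω - ξ ω * ρ ω| ∂P := by
            simpa [Real.norm_eq_abs] using
              norm_integral_le_integral_norm (fun ω => ξn n ω * ρ ω - ξ ω * ρ ω)
        _ ≤ ε n := by
            refine integral_mono (hint1.sub hint2).abs ((hξnint n).sub hξint).abs hptw
    -- the per-n estimate
    have hper : ∀ n : ℕ,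
        |∫ ω, ξ ω * chi X s S ω ∂P - ∫ ω, gY ω * chi X s S ω ∂P| ≤ 2 * ε n := by
      intro n
      obtain ⟨χ', hχ'm, hχ'b, hgstep, hΨstep⟩ :=
        cylinder_step (X := X) (N := N) P hXmeas hexch g hgm s S hS n u
      have hχ'meas0 : AEStronglyMeasurable χ' P := (hχ'm.mono hm'le).aestronglyMeasurable
      -- (A) ∫ ξn·chi = ∫ ξn·χ'
      have hA : ∫ ω, ξn n ω * chi X s S ω ∂P = ∫ ω, ξn n ω * χ' ω ∂P := by
        have hmeasn : @Measurable Ω ℝ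
            (MeasurableSpace.comap (fun ω => fun k : Fin n => Vf X N ω (u k)) inferInstance)
            _ (ξn n) := stronglyMeasurable_condExp.measurable
        obtain ⟨Ψ, hΨeq⟩ := factor_through_countable hmeasn
        set Ψc : (Fin n → ℕ) → ℝ := fun e => max (-Cg) (min (Ψ e) Cg) with hΨc
        have hΨcm : Measurable Ψc := measurable_of_countable _
        have hξnae : ξn n =ᵐ[P] fun ω => Ψc (fun k : Fin n => Vf X N ω (u k)) := by
          filter_upwards [hbddn n] with ω hω
          have hval : ξn n ω = Ψ (fun k : Fin n => Vf X N ω (u k)) := congrFun hΨeq ω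
          rw [hΨc]
          simp only
          rw [← hval, min_eq_left (abs_le.mp hω).2, max_eq_right (abs_le.mp hω).1]
        calc ∫ ω, ξn n ω * chi X s S ω ∂P
            = ∫ ω, Ψc (fun k : Fin n => Vf X N ω (u k)) * chi X s S ω ∂P := by
              refine integral_congr_ae ?_
              filter_upwards [hξnae] with ω hω
              rw [hω]
          _ = ∫ ω, Ψc (fun k : Fin n => Vf X N ω (u k)) * χ' ω ∂P := hΨstep Ψc hΨcm
          _ = ∫ ω, ξn n ω * χ' ω ∂P := by
              refine integral_congr_ae ?_
              filter_upwards [hξnae] with ω hω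
              rw [hω]
      -- (C) ∫ ξ·χ' = ∫ gY·χ'
      have hC : ∫ ω, ξ ω * χ' ω ∂P = ∫ ω, gY ω * χ' ω ∂P := by
        have h1 : ∫ ω, χ' ω * ξ ω ∂P = ∫ ω, χ' ω * gY ω ∂P :=
          integral_mul_condexp hm'le hχ'm hχ'b hgYint
        calc ∫ ω, ξ ω * χ' ω ∂P = ∫ ω, χ' ω * ξ ω ∂P := by simp_rw [mul_comm]
          _ = ∫ ω, χ' ω * gY ω ∂P := h1
          _ = ∫ ω, gY ω * χ' ω ∂P := by simp_rw [mul_comm]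
      -- assemble
      have hB1 := hdiff n (chi X s S) hchim.aestronglyMeasurable hchibdd
      have hB2 := hdiff n χ' hχ'meas0 hχ'b
      have hkey : ∫ ω, ξ ω * chi X s S ω ∂P - ∫ ω, gY ω * chi X s S ω ∂P
          = (∫ ω, ξ ω * chi X s S ω ∂P - ∫ ω, ξn n ω * chi X s S ω ∂P)
            + (∫ ω, ξn n ω * χ' ω ∂P - ∫ ω, ξ ω * χ' ω ∂P) := by
        rw [hA] at *
        rw [hC, ← hgstep]
        ring
      rw [hkey]
      calc |(∫ ω, ξ ω * chi X s S ω ∂P - ∫ ω, ξn n ω * chi X s S ω ∂P)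
            + (∫ ω, ξn n ω * χ' ω ∂P - ∫ ω, ξ ω * χ' ω ∂P)|
          ≤ |∫ ω, ξ ω * chi X s S ω ∂P - ∫ ω, ξn n ω * chi X s S ω ∂P|
            + |∫ ω, ξn n ω * χ' ω ∂P - ∫ ω, ξ ω * χ' ω ∂P| := abs_add_le _ _
        _ ≤ ε n + ε n := by
            refine add_le_add ?_ hB2
            rw [abs_sub_comm]
            exact hB1
        _ = 2 * ε n := by ring
    have htend : Tendsto (fun n => 2 * ε n) atTop (nhds 0) := by
      have := hL1.const_mul (2:ℝ)
      simpa using this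
    have habs : |∫ ω, ξ ω * chi X s S ω ∂P - ∫ ω, gY ω * chi X s S ω ∂P| ≤ 0 :=
      ge_of_tendsto' htend hper
    have := abs_nonpos_iff.mp habs
    linarith [sub_eq_zero.mp this]
  -- from products to set integrals over cylinder preimages
  have hcyl2 : ∀ (f : Ω → ℝ), Integrable f P → ∀ (s : Finset (NegZ × NZ))
      (S : Set (∀ _ : {x // x ∈ s}, ℕ)), MeasurableSet S →
      ∫ ω in (Zf X) ⁻¹' (cylinder s S), f ω ∂P = ∫ ω, f ω * chi X s S ω ∂P := by
    intro f hf s S hS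
    rw [← integral_indicator (hZf_meas hXmeas (hS.cylinder))]
    refine integral_congr_ae (ae_of_all _ fun ω => ?_)
    show (Zf X ⁻¹' (cylinder s S)).indicator f ω = f ω * chi X s S ω
    by_cases hω : Zf X ω ∈ cylinder s S
    · have hmem : (fun p : {x // x ∈ s} => Zf X ω p.1) ∈ S := hω
      rw [Set.indicator_of_mem (show ω ∈ Zf X ⁻¹' (cylinder s S) from hω),
        show chi X s S ω = 1 from Set.indicator_of_mem hmem _, mul_one]
    · have hmem : (fun p : {x // x ∈ s} => Zf X ω p.1) ∉ S := fun hc => hω hc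
      rw [Set.indicator_of_notMem (show ω ∉ Zf X ⁻¹' (cylinder s S) from hω),
        show chi X s S ω = 0 from Set.indicator_of_notMem hmem _, mul_zero]
  -- Dynkin extension to the full σ-algebra
  have hdynkin : ∀ T : Set (NegZ × NZ → ℕ), MeasurableSet T →
      ∫ ω in (Zf X) ⁻¹' T, ξ ω ∂P = ∫ ω in (Zf X) ⁻¹' T, gY ω ∂P := by
    intro T hT
    refine MeasurableSpace.induction_on_inter
      (C := fun T _ => ∫ ω in (Zf X) ⁻¹' T, ξ ω ∂P = ∫ ω in (Zf X) ⁻¹' T, gY ω ∂P)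
      generateFrom_measurableCylinders.symm isPiSystem_measurableCylinders
      ?_ ?_ ?_ ?_ T hT
    · simp
    · intro t ht
      obtain ⟨s, S, hS, rfl⟩ := (mem_measurableCylinders t).mp ht
      rw [hcyl2 ξ hξint s S hS, hcyl2 gY hgYint s S hS]
      exact hcylinder s S hS
    · intro t htm hind
      have h1 := integral_add_compl (hZf_meas hXmeas htm) hξint
      have h2 := integral_add_compl (hZf_meas hXmeas htm) hgYint
      have htotal : ∫ ω, ξ ω ∂P = ∫ ω, gY ω ∂P := integral_condExp hm'le
      rw [Set.preimage_compl]
      linarith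
    · intro f hdisj hm hind
      rw [Set.preimage_iUnion,
        integral_iUnion (fun i => hZf_meas hXmeas (hm i))
          (fun i j hij => (hdisj hij).preimage _) hξint.integrableOn,
        integral_iUnion (fun i => hZf_meas hXmeas (hm i))
          (fun i j hij => (hdisj hij).preimage _) hgYint.integrableOn]
      exact tsum_congr hind
  have hseteq : ∀ A : Set Ω, MeasurableSet[mZc X] A →
      ∫ ω in A, ξ ω ∂P = ∫ ω in A, gY ω ∂P := by
    intro A hA
    obtain ⟨T, hT, rfl⟩ := hA
    exact hdynkin T hT
  exact ae_eq_condExp_of_forall_setIntegral_eq hmZle hgYint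
    (fun A _ _ => integrable_condExp.integrableOn)
    (fun A hA _ => hseteq A hA)
    ((stronglyMeasurable_condExp.mono mV_le_mZc).aestronglyMeasurable)


end SubarrayAux

section Main

open SubarrayAux

/-- For an exchangeable array indexed by `ℤ ∖ {0}` and a finite set `N ⊆ ℕ`, the
subarray `(X(i,j))_{i,j∈N}` and `(X(i,j) : i < 0, j ∈ ℤ₋ ∪ ℕ)` are conditionally
independent given the σ-algebra generated by `(X(i,j) : i < 0, j ∈ ℤ₋ ∪ N)`. -/
theorem subarray_condIndep
    {Ω : Type*} [MeasurableSpace Ω] (P : Measure Ω) [IsProbabilityMeasure P]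
    (X : NZ → NZ → Ω → ℕ) (hXmeas : ∀ i j, Measurable (X i j))
    (hsymm : ∀ᵐ ω ∂P, ∀ i j, X i j ω = X j i ω)
    (heven : ∀ᵐ ω ∂P, ∀ i, Even (X i i ω))
    -- exchangeability under finitely supported permutations of `ℤ ∖ {0}`
    (hexch : ∀ τ : Equiv.Perm NZ, {x | τ x ≠ x}.Finite →
      Measure.map (fun ω => fun p : NZ × NZ => X (τ p.1) (τ p.2) ω) P =
        Measure.map (fun ω => fun p : NZ × NZ => X p.1 p.2 ω) P)
    (N : Finset PosZ) :
    CondIndepPair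
      -- the σ-algebra generated by `(X(i,j) : i < 0, j ∈ ℤ₋ ∪ N)`
      (MeasurableSpace.comap
        (fun ω => fun p : NegZ × (NegZ ⊕ {x // x ∈ N}) =>
          X (negToNZ p.1) (Sum.elim negToNZ (fun x => posToNZ x.1) p.2) ω) inferInstance)
      -- `(X(i,j))_{i,j ∈ N}`
      (fun ω => fun p : {x // x ∈ N} × {x // x ∈ N} =>
        X (posToNZ p.1.1) (posToNZ p.2.1) ω)
      -- `(X(i,j) : i < 0, j ∈ ℤ₋ ∪ ℕ)`
      (fun ω => fun p : NegZ × NZ => X (negToNZ p.1) p.2 ω) P := by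
  classical
  intro g h hgm hhm hgb hhb
  obtain ⟨Cg, hCg⟩ := hgb
  obtain ⟨Ch, hCh⟩ := hhb
  show P[fun ω => g (Yf X N ω) * h (Zf X ω)|mV X N]
      =ᵐ[P] fun ω => (P[fun ω' => g (Yf X N ω')|mV X N]) ω *
        (P[fun ω' => h (Zf X ω')|mV X N]) ω
  have hm'le : (mV X N : MeasurableSpace Ω) ≤ _ := mV_le hXmeas
  have hmZle : (mZc X : MeasurableSpace Ω) ≤ _ := mZc_le hXmeas
  have hm'Z : (mV X N : MeasurableSpace Ω) ≤ mZc X := mV_le_mZc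
  haveI : SigmaFinite (P.trim hm'le) := (isFiniteMeasure_trim hm'le).toSigmaFinite
  haveI : SigmaFinite (P.trim hmZle) := (isFiniteMeasure_trim hmZle).toSigmaFinite
  have hCg0 : 0 ≤ Cg := le_trans (norm_nonneg _) (hCg (fun _ => 0))
  have hgYm : Measurable (fun ω => g (Yf X N ω)) := hgm.comp (hYf_meas hXmeas)
  have hhZm : Measurable (fun ω => h (Zf X ω)) := hhm.comp (hZf_meas hXmeas)
  have hgYint : Integrable (fun ω => g (Yf X N ω)) P :=
    ⟨hgYm.aestronglyMeasurable, HasFiniteIntegral.of_bounded (ae_of_all _ fun ω => hCg _)⟩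
  have hhZint : Integrable (fun ω => h (Zf X ω)) P :=
    ⟨hhZm.aestronglyMeasurable, HasFiniteIntegral.of_bounded (ae_of_all _ fun ω => hCh _)⟩
  have hprodint : Integrable (fun ω => h (Zf X ω) * g (Yf X N ω)) P :=
    hgYint.bdd_mul (c := Ch) hhZm.aestronglyMeasurable (ae_of_all _ fun ω => hCh _)
  have hkey : P[fun ω => g (Yf X N ω)|mV X N] =ᵐ[P] P[fun ω => g (Yf X N ω)|mZc X] :=
    condexp_eq P hXmeas hexch g hgm Cg hCg
  have hZsm : StronglyMeasurable[mZc X] (fun ω => h (Zf X ω)) :=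
    (hhm.comp (Measurable.of_comap_le le_rfl)).stronglyMeasurable
  -- Step 1: pull `h(Z)` out of the conditional expectation w.r.t. mZc
  have step1 : P[fun ω => g (Yf X N ω) * h (Zf X ω)|mZc X]
      =ᵐ[P] fun ω => h (Zf X ω) * (P[fun ω' => g (Yf X N ω')|mZc X]) ω := by
    have h1 : (fun ω => g (Yf X N ω) * h (Zf X ω))
        = (fun ω => h (Zf X ω)) * (fun ω => g (Yf X N ω)) := by
      funext ω; exact mul_comm _ _
    rw [h1]
    exact condExp_mul_of_stronglyMeasurable_left hZsm hprodint hgYint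
  -- Step 2: replace `E[g(Y)|mZc]` with `E[g(Y)|mV]`
  have step2 : (fun ω => h (Zf X ω) * (P[fun ω' => g (Yf X N ω')|mZc X]) ω)
      =ᵐ[P] fun ω => h (Zf X ω) * (P[fun ω' => g (Yf X N ω')|mV X N]) ω := by
    filter_upwards [hkey] with ω hω
    rw [hω]
  -- Step 3: tower property
  have step3 : P[fun ω => g (Yf X N ω) * h (Zf X ω)|mV X N]
      =ᵐ[P] P[P[fun ω => g (Yf X N ω) * h (Zf X ω)|mZc X]|mV X N] :=
    (condExp_condExp_of_le hm'Z hmZle).symm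
  have step4 : P[P[fun ω => g (Yf X N ω) * h (Zf X ω)|mZc X]|mV X N]
      =ᵐ[P] P[fun ω => h (Zf X ω) * (P[fun ω' => g (Yf X N ω')|mV X N]) ω|mV X N] :=
    condExp_congr_ae (step1.trans step2)
  -- Step 5: pull `E[g(Y)|mV]` out
  have hbddξ : ∀ᵐ ω ∂P, |(P[fun ω' => g (Yf X N ω')|mV X N]) ω| ≤ Cg := by
    have hgYbdd : ∀ᵐ ω ∂P, |g (Yf X N ω)| ≤ (Cg.toNNReal : ℝ) := by
      refine ae_of_all _ fun ω => ?_
      rw [Real.coe_toNNReal _ hCg0, ← Real.norm_eq_abs]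
      exact hCg _
    filter_upwards [ae_bdd_condExp_of_ae_bdd (m := mV X N) hgYbdd] with ω hω
    rwa [Real.coe_toNNReal _ hCg0] at hω
  have hmix : Integrable (fun ω => (P[fun ω' => g (Yf X N ω')|mV X N]) ω * h (Zf X ω)) P := by
    refine Integrable.bdd_mul (c := Cg) hhZint
      (stronglyMeasurable_condExp.mono hm'le).aestronglyMeasurable ?_
    filter_upwards [hbddξ] with ω hω
    rwa [Real.norm_eq_abs]
  have step5 : P[fun ω => (P[fun ω' => g (Yf X N ω')|mV X N]) ω * h (Zf X ω)|mV X N]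
      =ᵐ[P] fun ω => (P[fun ω' => g (Yf X N ω')|mV X N]) ω * (P[fun ω' => h (Zf X ω')|mV X N]) ω := by
    exact condExp_mul_of_stronglyMeasurable_left stronglyMeasurable_condExp hmix hhZint
  have hcomm : P[fun ω => h (Zf X ω) * (P[fun ω' => g (Yf X N ω')|mV X N]) ω|mV X N]
      =ᵐ[P] P[fun ω => (P[fun ω' => g (Yf X N ω')|mV X N]) ω * h (Zf X ω)|mV X N] := by
    refine condExp_congr_ae (ae_of_all _ fun ω => mul_comm _ _)
  exact ((step3.trans step4).trans hcomm).trans step5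

end Main
end

section
/- Let P be a vertex exchangeable probability measure on the space A_ℕ of symmetric ℕ₀-valued arrays indexed by ℕ×ℕ with even diagonal (equipped with the product σ-algebra). Then the σ-algebra of symmetric events S_∞ is P-trivial (every event in it has probability 0 or 1) if and only if the tail σ-algebra G_∞ is P-trivial. -/
open MeasureTheory
open scoped symmDiff

/-- `A_ℕ`: symmetric `ℕ₀`-valued arrays indexed by `ℕ × ℕ` with even diagonal,
equipped with the σ-algebra generated by the coordinates. -/
abbrev ArrSpace : Type := {A : ℕ → ℕ → ℕ // (∀ i j, A i j = A j i) ∧ ∀ i, Even (A i i)}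

/-- Relabeling of the vertices by a permutation `τ` of `ℕ`. -/
def relabel (τ : Equiv.Perm ℕ) (A : ArrSpace) : ArrSpace :=
  ⟨fun i j => A.1 (τ i) (τ j), fun i j => A.2.1 (τ i) (τ j), fun i => A.2.2 (τ i)⟩

/-- The σ-algebra `G_n` generated by the coordinates `A(i,j)` with `i,j > n`. -/
def tailAlg (n : ℕ) : MeasurableSpace ArrSpace :=
  MeasurableSpace.comap
    (fun A : ArrSpace => fun p : {p : ℕ × ℕ // n < p.1 ∧ n < p.2} => A.1 p.1.1 p.1.2)
    inferInstance

namespace SymmTailAux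

open MeasurableSpace Filter Set
open scoped symmDiff

/-- Measurability of a single entry. -/
lemma meas_entry (i j : ℕ) : Measurable fun A : ArrSpace => A.1 i j :=
  (measurable_pi_apply j).comp ((measurable_pi_apply i).comp measurable_subtype_coe)

/-- The projection onto the entries with indices `≤ n`. -/
def headProj (n : ℕ) (A : ArrSpace) : {p : ℕ × ℕ // p.1 ≤ n ∧ p.2 ≤ n} → ℕ :=
  fun p => A.1 p.1.1 p.1.2

/-- The σ-algebra generated by the entries with indices `≤ n`. -/
def headAlg (n : ℕ) : MeasurableSpace ArrSpace :=
  MeasurableSpace.comap (headProj n) inferInstance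

/-- The projection onto the entries with indices `> n`. -/
def tailProj (n : ℕ) (A : ArrSpace) : {p : ℕ × ℕ // n < p.1 ∧ n < p.2} → ℕ :=
  fun p => A.1 p.1.1 p.1.2

lemma tailAlg_eq (n : ℕ) : tailAlg n = MeasurableSpace.comap (tailProj n) inferInstance := rfl

lemma headAlg_mono : Monotone headAlg := by
  intro n m h
  have hcomp : headProj n =
      (fun (f : {p : ℕ × ℕ // p.1 ≤ m ∧ p.2 ≤ m} → ℕ)
          (q : {p : ℕ × ℕ // p.1 ≤ n ∧ p.2 ≤ n}) =>
        f ⟨q.1, le_trans q.2.1 h, le_trans q.2.2 h⟩) ∘ headProj m := rfl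
  rw [headAlg, headAlg, hcomp, ← MeasurableSpace.comap_comp]
  exact MeasurableSpace.comap_mono
    (measurable_iff_comap_le.mp (measurable_pi_lambda _ fun q => measurable_pi_apply _))

lemma tailAlg_antitone : Antitone tailAlg := by
  intro n m h
  have hcomp : tailProj m =
      (fun (f : {p : ℕ × ℕ // n < p.1 ∧ n < p.2} → ℕ)
          (q : {p : ℕ × ℕ // m < p.1 ∧ m < p.2}) =>
        f ⟨q.1, lt_of_le_of_lt h q.2.1, lt_of_le_of_lt h q.2.2⟩) ∘ tailProj n := rfl
  rw [tailAlg_eq, tailAlg_eq, hcomp, ← MeasurableSpace.comap_comp]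
  exact MeasurableSpace.comap_mono
    (measurable_iff_comap_le.mp (measurable_pi_lambda _ fun q => measurable_pi_apply _))

lemma headAlg_le (n : ℕ) : headAlg n ≤ (inferInstance : MeasurableSpace ArrSpace) :=
  measurable_iff_comap_le.mp (measurable_pi_lambda _ fun p => meas_entry p.1.1 p.1.2)

lemma tailAlg_le (n : ℕ) : tailAlg n ≤ (inferInstance : MeasurableSpace ArrSpace) :=
  measurable_iff_comap_le.mp (measurable_pi_lambda _ fun p => meas_entry p.1.1 p.1.2)

lemma inst_eq_iSup : (inferInstance : MeasurableSpace ArrSpace) = ⨆ n, headAlg n := by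
  refine le_antisymm ?_ (iSup_le headAlg_le)
  have hrfl : (inferInstance : MeasurableSpace ArrSpace) =
      MeasurableSpace.comap (fun A : ArrSpace => (A.1 : ℕ → ℕ → ℕ))
        (⨆ i : ℕ, MeasurableSpace.comap (fun b : ℕ → ℕ → ℕ => b i)
          (⨆ j : ℕ, MeasurableSpace.comap (fun c : ℕ → ℕ => c j) inferInstance)) := rfl
  rw [hrfl, MeasurableSpace.comap_iSup]
  refine iSup_le fun i => ?_
  rw [MeasurableSpace.comap_comp, MeasurableSpace.comap_iSup]
  refine iSup_le fun j => ?_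
  rw [MeasurableSpace.comap_comp]
  refine le_trans ?_ (le_iSup headAlg (max i j))
  have hfac : ((fun c : ℕ → ℕ => c j) ∘ ((fun b : ℕ → ℕ → ℕ => b i) ∘
      fun A : ArrSpace => (A.1 : ℕ → ℕ → ℕ))) =
      (fun f : {p : ℕ × ℕ // p.1 ≤ max i j ∧ p.2 ≤ max i j} → ℕ =>
        f ⟨(i, j), le_max_left _ _, le_max_right _ _⟩) ∘ headProj (max i j) := rfl
  rw [hfac, ← MeasurableSpace.comap_comp]
  exact MeasurableSpace.comap_mono (measurable_iff_comap_le.mp (measurable_pi_apply _))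

/-- The algebra of sets depending on finitely many entries. -/
def cylSets : Set (Set ArrSpace) := ⋃ n, {s | MeasurableSet[headAlg n] s}

lemma mem_cylSets {n : ℕ} {s : Set ArrSpace} (h : MeasurableSet[headAlg n] s) :
    s ∈ cylSets := Set.mem_iUnion.2 ⟨n, h⟩

lemma of_mem_cylSets {s : Set ArrSpace} (h : s ∈ cylSets) :
    ∃ n, MeasurableSet[headAlg n] s := Set.mem_iUnion.1 h

lemma isSetAlgebra_cylSets : IsSetAlgebra cylSets where
  empty_mem := mem_cylSets (n := 0) (@MeasurableSet.empty _ (headAlg 0))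
  compl_mem := by
    intro s hs
    obtain ⟨n, hn⟩ := of_mem_cylSets hs
    exact mem_cylSets hn.compl
  union_mem := by
    intro s t hs ht
    obtain ⟨n, hn⟩ := of_mem_cylSets hs
    obtain ⟨m, hm⟩ := of_mem_cylSets ht
    exact mem_cylSets
      ((headAlg_mono (le_max_left n m) _ hn).union (headAlg_mono (le_max_right n m) _ hm))

lemma inst_eq_generateFrom :
    (inferInstance : MeasurableSpace ArrSpace) = MeasurableSpace.generateFrom cylSets := by
  refine le_antisymm ?_ (MeasurableSpace.generateFrom_le ?_)
  · rw [inst_eq_iSup]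
    refine iSup_le fun n => ?_
    intro s hs
    exact MeasurableSpace.measurableSet_generateFrom (mem_cylSets hs)
  · rintro s hs
    obtain ⟨n, hn⟩ := of_mem_cylSets hs
    exact headAlg_le n _ hn

/-- The involution exchanging `i` and `i + (n+1)` for `i ≤ n`. -/
def swapFun (n : ℕ) (i : ℕ) : ℕ :=
  if i ≤ n then i + (n + 1) else if i ≤ 2 * n + 1 then i - (n + 1) else i

lemma swapFun_invol (n : ℕ) : Function.Involutive (swapFun n) := by
  intro i
  unfold swapFun
  split_ifs <;> omega

/-- The permutation exchanging `i` and `i + (n+1)` for `i ≤ n`. -/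
def swapPerm (n : ℕ) : Equiv.Perm ℕ :=
  Function.Involutive.toPerm (swapFun n) (swapFun_invol n)

lemma swapPerm_apply (n i : ℕ) : swapPerm n i = swapFun n i := rfl

lemma swapPerm_finite (n : ℕ) : {x | swapPerm n x ≠ x}.Finite := by
  refine (Set.finite_Iic (2 * n + 1)).subset fun x hx => ?_
  simp only [Set.mem_setOf_eq, swapPerm_apply] at hx
  simp only [Set.mem_Iic]
  by_contra hc
  push_neg at hc
  apply hx
  unfold swapFun
  split_ifs <;> omega

lemma relabel_measurable (τ : Equiv.Perm ℕ) : Measurable (relabel τ) :=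
  Measurable.subtype_mk
    (measurable_pi_lambda _ fun i => measurable_pi_lambda _ fun j => meas_entry (τ i) (τ j))

/-- Sets in `tailAlg n` are invariant under relabelings fixing everything above `n`. -/
lemma tail_invariant {n : ℕ} {s : Set ArrSpace} (hs : MeasurableSet[tailAlg n] s)
    (τ : Equiv.Perm ℕ) (hτ : ∀ m, n < m → τ m = m) : relabel τ ⁻¹' s = s := by
  rw [tailAlg_eq] at hs
  obtain ⟨B, -, rfl⟩ := MeasurableSpace.measurableSet_comap.mp hs
  have hcomp : tailProj n ∘ relabel τ = tailProj n := by
    funext A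
    funext p
    simp only [Function.comp_apply, tailProj, relabel, hτ _ p.2.1, hτ _ p.2.2]
  rw [← Set.preimage_comp, hcomp]

/-- Pulling back a set depending only on entries `≤ n` by the swap gives a tail set. -/
lemma swap_preimage_tail {n : ℕ} {s : Set ArrSpace} (hs : MeasurableSet[headAlg n] s) :
    MeasurableSet[tailAlg n] (relabel (swapPerm n) ⁻¹' s) := by
  rw [headAlg] at hs
  obtain ⟨B, hB, rfl⟩ := MeasurableSpace.measurableSet_comap.mp hs
  set g : ({p : ℕ × ℕ // n < p.1 ∧ n < p.2} → ℕ) → ({p : ℕ × ℕ // p.1 ≤ n ∧ p.2 ≤ n} → ℕ) :=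
    fun f q => f ⟨(q.1.1 + (n + 1), q.1.2 + (n + 1)), by omega, by omega⟩ with hg
  have hcomp : headProj n ∘ relabel (swapPerm n) = g ∘ tailProj n := by
    funext A
    funext q
    have h1 : swapPerm n q.1.1 = q.1.1 + (n + 1) := by
      rw [swapPerm_apply]; unfold swapFun; rw [if_pos q.2.1]
    have h2 : swapPerm n q.1.2 = q.1.2 + (n + 1) := by
      rw [swapPerm_apply]; unfold swapFun; rw [if_pos q.2.2]
    simp only [Function.comp_apply, headProj, relabel, h1, h2, hg, tailProj]
  rw [tailAlg_eq, ← Set.preimage_comp, hcomp, Set.preimage_comp]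
  exact MeasurableSpace.measurableSet_comap.mpr
    ⟨g ⁻¹' B, (measurable_pi_lambda _ fun q => measurable_pi_apply _) hB, rfl⟩

end SymmTailAux

/-- For a vertex exchangeable probability measure on `A_ℕ`, the σ-algebra of symmetric
events is trivial if and only if the tail σ-algebra is trivial. -/
theorem symmetric_trivial_iff_tail_trivial (P : Measure ArrSpace) [IsProbabilityMeasure P]
    -- vertex exchangeability
    (hexch : ∀ τ : Equiv.Perm ℕ, {x | τ x ≠ x}.Finite →
      Measure.map (relabel τ) P = P) :
    -- `S_∞` is trivial: every measurable event invariant under all finitely supported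
    -- relabelings has probability 0 or 1 ...
    ((∀ s : Set ArrSpace, MeasurableSet s →
        (∀ τ : Equiv.Perm ℕ, {x | τ x ≠ x}.Finite → relabel τ ⁻¹' s = s) →
        P s = 0 ∨ P s = 1)
      ↔
    -- ... if and only if `G_∞ = ⋂ₙ G_n` is trivial
    (∀ s : Set ArrSpace, (∀ n : ℕ, MeasurableSet[tailAlg n] s) →
        P s = 0 ∨ P s = 1)) := by
  open SymmTailAux in
  have hpre : ∀ (τ : Equiv.Perm ℕ), {x | τ x ≠ x}.Finite → ∀ {t : Set ArrSpace},
      MeasurableSet t → P (relabel τ ⁻¹' t) = P t := by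
    intro τ hτ t ht
    conv_rhs => rw [← hexch τ hτ]
    rw [Measure.map_apply (relabel_measurable τ) ht]
  constructor
  · -- symmetric trivial → tail trivial
    intro hsym s hs
    refine hsym s (tailAlg_le 0 _ (hs 0)) ?_
    intro τ hτ
    classical
    set F := hτ.toFinset with hF
    have hfix : ∀ m, F.sup id < m → τ m = m := by
      intro m hm
      by_contra hc
      have hmem : m ∈ F := by simp [hF, Set.Finite.mem_toFinset, hc]
      have hle := Finset.le_sup (f := id) hmem
      simp only [id_eq] at hle
      omega
    exact tail_invariant (hs (F.sup id)) τ hfix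
  · -- tail trivial → symmetric trivial
    intro htail s hs hinv
    have hdense : P.MeasureDense cylSets :=
      Measure.MeasureDense.of_generateFrom_isSetAlgebra_finite P isSetAlgebra_cylSets
        inst_eq_generateFrom
    -- for each n, find a tail-measurable approximation of s
    have H : ∀ n : ℕ, ∃ u : Set ArrSpace,
        MeasurableSet[tailAlg n] u ∧ P (s ∆ u) < ENNReal.ofReal ((1 / 2 : ℝ) ^ n) := by
      intro n
      obtain ⟨t, ht, hlt⟩ := hdense.approx s hs (measure_ne_top P s) ((1 / 2 : ℝ) ^ n)
        (by positivity)
      obtain ⟨m, hm⟩ := of_mem_cylSets ht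
      have hm' : MeasurableSet[headAlg (max m n)] t := headAlg_mono (le_max_left m n) _ hm
      have htm : MeasurableSet t := headAlg_le _ _ hm'
      refine ⟨relabel (swapPerm (max m n)) ⁻¹' t,
        tailAlg_antitone (le_max_right m n) _ (swap_preimage_tail hm'), ?_⟩
      have hsymm : s ∆ (relabel (swapPerm (max m n)) ⁻¹' t) =
          relabel (swapPerm (max m n)) ⁻¹' (s ∆ t) := by
        rw [Set.preimage_symmDiff, hinv _ (swapPerm_finite _)]
      rw [hsymm, hpre _ (swapPerm_finite _) (hs.symmDiff htm)]
      exact hlt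
    choose u hu1 hu2 using H
    set T : Set ArrSpace := Filter.limsup u Filter.atTop with hT
    -- T is a tail set
    have hTtail : ∀ k : ℕ, MeasurableSet[tailAlg k] T := by
      intro k
      have : T = Filter.limsup (fun n => u (n + k)) Filter.atTop :=
        (Filter.limsup_nat_add u k).symm
      rw [this, Filter.limsup_eq_iInf_iSup_of_nat]
      simp only [Set.iInf_eq_iInter, Set.iSup_eq_iUnion]
      refine MeasurableSet.iInter fun N => MeasurableSet.iUnion fun i =>
        MeasurableSet.iUnion fun _ => ?_
      exact tailAlg_antitone (Nat.le_add_left k i) _ (hu1 (i + k))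
    -- s and T agree almost everywhere
    have hsub : s ∆ T ⊆ Filter.limsup (fun n => s ∆ u n) Filter.atTop := by
      intro x hx
      rw [Filter.mem_limsup_iff_frequently_mem]
      rcases Set.mem_symmDiff.1 hx with ⟨hxs, hxT⟩ | ⟨hxT, hxs⟩
      · have : ∀ᶠ n in Filter.atTop, x ∉ u n := by
          by_contra hc
          exact hxT (Filter.mem_limsup_iff_frequently_mem.2
            ((Filter.not_eventually.1 hc).mono fun n hn => not_not.mp hn))
        exact (this.mono fun n hn => Set.mem_symmDiff.2 (Or.inl ⟨hxs, hn⟩)).frequently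
      · exact (Filter.mem_limsup_iff_frequently_mem.1 hxT).mono
          fun n hn => Set.mem_symmDiff.2 (Or.inr ⟨hn, hxs⟩)
    have hzero : P (Filter.limsup (fun n => s ∆ u n) Filter.atTop) = 0 := by
      refine measure_limsup_atTop_eq_zero ?_
      have hle : ∑' n, P (s ∆ u n) ≤ ∑' n : ℕ, (2⁻¹ : ENNReal) ^ n := by
        refine ENNReal.tsum_le_tsum fun n => le_of_lt (lt_of_lt_of_le (hu2 n) ?_)
        rw [ENNReal.ofReal_pow (by norm_num : (0:ℝ) ≤ 1 / 2)]
        gcongr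
        rw [one_div, ENNReal.ofReal_inv_of_pos (by norm_num)]
        norm_num
      refine ne_top_of_le_ne_top ?_ hle
      rw [ENNReal.tsum_geometric, ENNReal.one_sub_inv_two]
      simp
    have hdiff : P (s ∆ T) = 0 := measure_mono_null hsub hzero
    have hPsT : P s = P T := measure_congr (measure_symmDiff_eq_zero_iff.mp hdiff)
    rw [hPsT]
    exact htail T hTtail
end
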